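/- Let φ be a real-valued, twice continuously differentiable function on [a, b] such that φ'(t) ≠ 0 for all t ∈ [a, b]. If φ(b) = φ(a) + 2kπ for some integer k and φ'(b) = φ'(a), then |∫_a^b e^{iφ(t)} dt| ≤ V, where V is the total variation of the function 1/φ' on the interval [a, b]. -/

import Mathlib

open MeasureTheory Filter Set intervalIntegral
open scoped Real

lemma aux_sum_le_evar (a b : ℝ) (hab : a < b) (g g' : ℝ → ℝ) (v : ℝ → ℂ)
    (hg : ∀ t ∈ Set.Icc a b, HasDerivWithinAt g (g' t) (Set.Icc a b) t)
    (hg'c : ContinuousOn g' (Set.Icc a b))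
    (hvc : ContinuousOn v (Set.Icc a b))
    (hv1 : ∀ t ∈ Set.Icc a b, ‖v t‖ ≤ 1) :
    ENNReal.ofReal (‖∫ t in a..b, (g' t : ℂ) * v t‖) ≤
      eVariationOn g (Set.Icc a b) := by
  apply ENNReal.le_of_forall_pos_le_add
  intro ε' hε' _
  have hε'' : (0:ℝ) < ε' := hε'
  have hba : (0:ℝ) < b - a := sub_pos.mpr hab
  have huIcc : Set.uIcc a b = Set.Icc a b := Set.uIcc_of_le hab.le
  obtain ⟨M0, hM0⟩ := isCompact_Icc.exists_bound_of_continuousOn hg'c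
  set M : ℝ := max M0 1 with hMdef
  have hM : 0 < M := lt_of_lt_of_le one_pos (le_max_right _ _)
  have hMb : ∀ t ∈ Set.Icc a b, |g' t| ≤ M := fun t ht => (hM0 t ht).trans (le_max_left _ _)
  set εv : ℝ := ε' / (M * (b - a)) with hεvdef
  have hεv : 0 < εv := div_pos hε'' (mul_pos hM hba)
  obtain ⟨δ, hδ, hucd⟩ :=
    Metric.uniformContinuousOn_iff.mp (isCompact_Icc.uniformContinuousOn_of_continuous hvc) εv hεv
  obtain ⟨n, hn⟩ := exists_nat_gt (max ((b - a) / δ) 0)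
  have hnpos : (0:ℝ) < n := lt_of_le_of_lt (le_max_right _ _) hn
  set Δ : ℝ := (b - a) / n with hΔdef
  have hΔpos : 0 < Δ := div_pos hba hnpos
  have hΔδ : Δ < δ := by
    rw [hΔdef, div_lt_iff₀ hnpos, mul_comm]
    have h1 : (b - a) / δ < n := lt_of_le_of_lt (le_max_left _ _) hn
    exact (div_lt_iff₀ hδ).mp h1
  have hnΔ : (n:ℝ) * Δ = b - a := mul_div_cancel₀ _ (ne_of_gt hnpos)
  set x : ℕ → ℝ := fun j => a + (min j n : ℕ) * Δ with hxdef
  have hxmono : Monotone x := by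
    intro i j hij
    have h1 : ((min i n : ℕ):ℝ) ≤ ((min j n : ℕ):ℝ) :=
      Nat.cast_le.mpr (min_le_min_right _ hij)
    simp only [hxdef]
    nlinarith
  have hxmem : ∀ j, x j ∈ Set.Icc a b := by
    intro j
    have h0 : (0:ℝ) ≤ ((min j n : ℕ):ℝ) := Nat.cast_nonneg _
    have h1 : ((min j n : ℕ):ℝ) ≤ (n:ℝ) := Nat.cast_le.mpr (min_le_right _ _)
    constructor
    · simp only [hxdef]; nlinarith
    · simp only [hxdef]; nlinarith
  have hx0 : x 0 = a := by simp [hxdef]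
  have hxn : x n = b := by simp [hxdef, hnΔ]
  have hxs : ∀ k, k < n → x (k+1) - x k = Δ := by
    intro k hk
    have h1 : min (k+1) n = k+1 := min_eq_left (Nat.succ_le_of_lt hk)
    have h2 : min k n = k := min_eq_left hk.le
    simp only [hxdef, h1, h2]
    push_cast
    ring
  have hfc : ContinuousOn (fun t => (g' t : ℂ) * v t) (Set.Icc a b) :=
    (Complex.continuous_ofReal.comp_continuousOn hg'c).mul hvc
  have hsub : ∀ k, Set.uIcc (x k) (x (k+1)) ⊆ Set.Icc a b := by
    intro k
    rw [← huIcc]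
    exact Set.uIcc_subset_uIcc (huIcc ▸ hxmem k) (huIcc ▸ hxmem (k+1))
  have hint : ∀ k, IntervalIntegrable (fun t => (g' t : ℂ) * v t) volume (x k) (x (k+1)) :=
    fun k => (hfc.mono (hsub k)).intervalIntegrable
  have hsum : ∑ k ∈ Finset.range n, (∫ t in x k..x (k+1), (g' t : ℂ) * v t)
      = ∫ t in a..b, (g' t : ℂ) * v t := by
    have h := intervalIntegral.sum_integral_adjacent_intervals (a := x) (n := n)
      (fun k _ => hint k)
    rwa [hx0, hxn] at h
  have hg'int : ∀ k, IntervalIntegrable g' volume (x k) (x (k+1)) :=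
    fun k => (hg'c.mono (hsub k)).intervalIntegrable
  have hgc : ContinuousOn g (Set.Icc a b) := fun t ht => (hg t ht).continuousWithinAt
  have hftc : ∀ k, k < n → g (x (k+1)) - g (x k) = ∫ t in x k..x (k+1), g' t := by
    intro k hk
    have hle : x k ≤ x (k+1) := hxmono (Nat.le_succ k)
    have hIccsub : Set.Icc (x k) (x (k+1)) ⊆ Set.Icc a b := by
      rw [← Set.uIcc_of_le hle]; exact hsub k
    have hder : ∀ t ∈ Set.Ioo (x k) (x (k+1)), HasDerivWithinAt g (g' t) (Set.Ioi t) t := by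
      intro t ht
      have htab : t ∈ Set.Ioo a b :=
        ⟨lt_of_le_of_lt (hxmem k).1 ht.1, lt_of_lt_of_le ht.2 (hxmem (k+1)).2⟩
      exact ((hg t (Set.Ioo_subset_Icc_self htab)).hasDerivAt
        (Icc_mem_nhds htab.1 htab.2)).hasDerivWithinAt
    exact (intervalIntegral.integral_eq_sub_of_hasDeriv_right_of_le hle
      (hgc.mono hIccsub) hder (hg'int k)).symm
  have herr : ∀ k, k < n → ‖(∫ t in x k..x (k+1), (g' t : ℂ) * v t)
      - v (x k) * ((g (x (k+1)) : ℂ) - (g (x k) : ℂ))‖ ≤ M * εv * Δ := by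
    intro k hk
    have hle : x k ≤ x (k+1) := hxmono (Nat.le_succ k)
    have hcast : ((g (x (k+1)) - g (x k) : ℝ) : ℂ)
        = ∫ t in x k..x (k+1), (g' t : ℂ) := by
      rw [hftc k hk]; exact (intervalIntegral.integral_ofReal).symm
    have hvint : IntervalIntegrable (fun t => v (x k) * (g' t : ℂ)) volume (x k) (x (k+1)) := by
      apply ContinuousOn.intervalIntegrable
      exact continuousOn_const.mul ((Complex.continuous_ofReal.comp_continuousOn hg'c).mono (hsub k))
    have hsplit := intervalIntegral.integral_sub (hint k) hvint
    have hB : (∫ t in x k..x (k+1), v (x k) * (g' t : ℂ))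
        = v (x k) * ((g (x (k+1)) : ℂ) - (g (x k) : ℂ)) := by
      rw [intervalIntegral.integral_const_mul, ← hcast]
      push_cast
      ring
    rw [← hB, ← hsplit]
    have habsd : |x (k+1) - x k| = Δ := by rw [hxs k hk]; exact abs_of_pos hΔpos
    have hbound : ‖∫ t in x k..x (k+1), ((g' t : ℂ) * v t - v (x k) * (g' t : ℂ))‖
        ≤ M * εv * |x (k+1) - x k| := by
      apply intervalIntegral.norm_integral_le_of_norm_le_const
      intro t ht
      rw [Set.uIoc_of_le hle] at ht
      have htmem : t ∈ Set.Icc a b := by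
        apply hsub k
        rw [Set.uIcc_of_le hle]
        exact Set.Ioc_subset_Icc_self ht
      have hdist : dist t (x k) < δ := by
        rw [Real.dist_eq, abs_of_pos (sub_pos.mpr ht.1)]
        calc t - x k ≤ x (k+1) - x k := by linarith [ht.2]
          _ = Δ := hxs k hk
          _ < δ := hΔδ
      have hvv : ‖v t - v (x k)‖ ≤ εv :=
        le_of_lt (by simpa [dist_eq_norm] using hucd t htmem (x k) (hxmem k) hdist)
      have hfac : (g' t : ℂ) * v t - v (x k) * (g' t : ℂ) = (g' t : ℂ) * (v t - v (x k)) := by ring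
      show ‖(g' t : ℂ) * v t - v (x k) * (g' t : ℂ)‖ ≤ M * εv
      rw [hfac, norm_mul]
      have h1 : ‖(g' t : ℂ)‖ ≤ M := by
        rw [Complex.norm_real, Real.norm_eq_abs]; exact hMb t htmem
      exact mul_le_mul h1 hvv (norm_nonneg _) hM.le
    calc ‖∫ t in x k..x (k+1), ((g' t : ℂ) * v t - v (x k) * (g' t : ℂ))‖
        ≤ M * εv * |x (k+1) - x k| := hbound
      _ = M * εv * Δ := by rw [habsd]
  -- assemble
  have habs : ‖∫ t in a..b, (g' t : ℂ) * v t‖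
      ≤ (∑ k ∈ Finset.range n, |g (x (k+1)) - g (x k)|) + ε' := by
    rw [← hsum]
    calc ‖∑ k ∈ Finset.range n, ∫ t in x k..x (k+1), (g' t : ℂ) * v t‖
        ≤ ∑ k ∈ Finset.range n, ‖∫ t in x k..x (k+1), (g' t : ℂ) * v t‖ := by
          exact norm_sum_le _ _
      _ ≤ ∑ k ∈ Finset.range n, (|g (x (k+1)) - g (x k)| + M * εv * Δ) := by
          apply Finset.sum_le_sum
          intro k hk
          have hk' : k < n := Finset.mem_range.mp hk
          have htri : ‖∫ t in x k..x (k+1), (g' t : ℂ) * v t‖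
              ≤ ‖v (x k) * ((g (x (k+1)) : ℂ) - (g (x k) : ℂ))‖
                + ‖(∫ t in x k..x (k+1), (g' t : ℂ) * v t)
                  - v (x k) * ((g (x (k+1)) : ℂ) - (g (x k) : ℂ))‖ :=
            by exact norm_le_insert' (∫ t in x k..x (k+1), (g' t : ℂ) * v t) (v (x k) * ((g (x (k+1)) : ℂ) - (g (x k) : ℂ)))
          have hfirst : ‖v (x k) * ((g (x (k+1)) : ℂ) - (g (x k) : ℂ))‖
              ≤ |g (x (k+1)) - g (x k)| := by
            rw [norm_mul]
            have h2 : ((g (x (k+1)) : ℂ) - (g (x k) : ℂ)) = ((g (x (k+1)) - g (x k) : ℝ) : ℂ) := by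
              push_cast; ring
            rw [h2, Complex.norm_real, Real.norm_eq_abs]
            calc ‖v (x k)‖ * |g (x (k+1)) - g (x k)|
                ≤ 1 * |g (x (k+1)) - g (x k)| :=
                  mul_le_mul_of_nonneg_right (hv1 _ (hxmem k)) (abs_nonneg _)
              _ = _ := one_mul _
          linarith [herr k hk', htri, hfirst]
      _ = (∑ k ∈ Finset.range n, |g (x (k+1)) - g (x k)|) + n * (M * εv * Δ) := by
          rw [Finset.sum_add_distrib, Finset.sum_const, Finset.card_range, nsmul_eq_mul]
      _ ≤ (∑ k ∈ Finset.range n, |g (x (k+1)) - g (x k)|) + ε' := by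
          have hMne : M ≠ 0 := ne_of_gt hM
          have hbane : b - a ≠ 0 := ne_of_gt hba
          have h3 : (n:ℝ) * (M * εv * Δ) = M * εv * (b - a) := by rw [← hnΔ]; ring
          have h4 : (n:ℝ) * (M * εv * Δ) = ε' := by
            rw [h3, hεvdef]; field_simp
          rw [h4]
  have hSvar : ENNReal.ofReal (∑ k ∈ Finset.range n, |g (x (k+1)) - g (x k)|)
      ≤ eVariationOn g (Set.Icc a b) := by
    calc ENNReal.ofReal (∑ k ∈ Finset.range n, |g (x (k+1)) - g (x k)|)
        = ∑ k ∈ Finset.range n, ENNReal.ofReal |g (x (k+1)) - g (x k)| :=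
          ENNReal.ofReal_sum_of_nonneg (fun _ _ => abs_nonneg _)
      _ = ∑ k ∈ Finset.range n, edist (g (x (k+1))) (g (x k)) := by
          refine Finset.sum_congr rfl fun k _ => ?_
          rw [edist_dist, Real.dist_eq]
      _ ≤ eVariationOn g (Set.Icc a b) := eVariationOn.sum_le (f := g) (n := n) hxmono hxmem
  calc ENNReal.ofReal (‖∫ t in a..b, (g' t : ℂ) * v t‖)
      ≤ ENNReal.ofReal ((∑ k ∈ Finset.range n, |g (x (k+1)) - g (x k)|) + ε') :=
        ENNReal.ofReal_le_ofReal habs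
    _ ≤ ENNReal.ofReal (∑ k ∈ Finset.range n, |g (x (k+1)) - g (x k)|)
        + ENNReal.ofReal ε' := ENNReal.ofReal_add_le
    _ ≤ eVariationOn g (Set.Icc a b) + ε' := by
        rw [ENNReal.ofReal_coe_nnreal]
        exact add_le_add_left hSvar _
/-- Lemma 1(a): if `φ` is real, twice continuously differentiable on `[a,b]`, `φ'` has no
zeros on `[a,b]`, `φ(b) = φ(a) + 2kπ` and `φ'(b) = φ'(a)`, then
`|∫_a^b e^{iφ}| ≤ Var_{[a,b]}(1/φ')`. -/
theorem abs_integral_exp_le_variation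
    (a b : ℝ) (hab : a < b) (φ : ℝ → ℝ)
    (hreg : ContDiffOn ℝ 2 φ (Set.Icc a b))
    (hne : ∀ t ∈ Set.Icc a b, derivWithin φ (Set.Icc a b) t ≠ 0)
    (hper : ∃ k : ℤ, φ b = φ a + 2 * (k : ℝ) * π)
    (hd : derivWithin φ (Set.Icc a b) b = derivWithin φ (Set.Icc a b) a) :
    ENNReal.ofReal
        (‖∫ t in a..b, Complex.exp (Complex.I * (φ t : ℂ))‖) ≤
      eVariationOn (fun t => (derivWithin φ (Set.Icc a b) t)⁻¹) (Set.Icc a b) := by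
  have huIcc : Set.uIcc a b = Set.Icc a b := Set.uIcc_of_le hab.le
  have hunique : UniqueDiffOn ℝ (Set.Icc a b) := uniqueDiffOn_Icc hab
  set φ' : ℝ → ℝ := derivWithin φ (Set.Icc a b) with hφ'def
  have hφ'C1 : ContDiffOn ℝ 1 φ' (Set.Icc a b) := hreg.derivWithin hunique (by norm_num)
  set g : ℝ → ℝ := fun t => (φ' t)⁻¹ with hgdef
  have hgC1 : ContDiffOn ℝ 1 g (Set.Icc a b) := hφ'C1.inv hne
  set g' : ℝ → ℝ := derivWithin g (Set.Icc a b) with hg'def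
  have hg'C0 : ContDiffOn ℝ 0 g' (Set.Icc a b) := hgC1.derivWithin hunique (by norm_num)
  have hg'cont : ContinuousOn g' (Set.Icc a b) := hg'C0.continuousOn
  have hφd : ∀ t ∈ Set.Icc a b, HasDerivWithinAt φ (φ' t) (Set.Icc a b) t :=
    fun t ht => ((hreg.differentiableOn (by norm_num)) t ht).hasDerivWithinAt
  have hgd : ∀ t ∈ Set.Icc a b, HasDerivWithinAt g (g' t) (Set.Icc a b) t :=
    fun t ht => ((hgC1.differentiableOn (by norm_num)) t ht).hasDerivWithinAt
  have hud : ∀ t ∈ Set.Icc a b,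
      HasDerivWithinAt (fun s => ((g s : ℝ) : ℂ)) ((g' t : ℂ)) (Set.Icc a b) t := by
    intro t ht
    exact (hgd t ht).ofReal_comp
  have hvd : ∀ t ∈ Set.Icc a b,
      HasDerivWithinAt (fun s => Complex.exp (Complex.I * (φ s : ℂ)))
        (Complex.exp (Complex.I * (φ t : ℂ)) * (Complex.I * (φ' t : ℂ))) (Set.Icc a b) t := by
    intro t ht
    have h1 : HasDerivWithinAt (fun s => ((φ s : ℝ) : ℂ)) ((φ' t : ℂ)) (Set.Icc a b) t := by
      exact (hφd t ht).ofReal_comp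
    exact (h1.const_mul Complex.I).cexp
  have hφc : ContinuousOn φ (Set.Icc a b) := hreg.continuousOn
  have hvc : ContinuousOn (fun s => Complex.exp (Complex.I * (φ s : ℂ))) (Set.Icc a b) :=
    (Complex.continuous_exp.comp
      (continuous_const.mul Complex.continuous_ofReal)).comp_continuousOn hφc
  have hφ'c : ContinuousOn φ' (Set.Icc a b) := hφ'C1.continuousOn
  have hv'c : ContinuousOn
      (fun t => Complex.exp (Complex.I * (φ t : ℂ)) * (Complex.I * (φ' t : ℂ)))
      (Set.Icc a b) :=
    hvc.mul (continuousOn_const.mul (Complex.continuous_ofReal.comp_continuousOn hφ'c))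
  have hu'c : ContinuousOn (fun t => ((g' t : ℝ) : ℂ)) (Set.Icc a b) :=
    Complex.continuous_ofReal.comp_continuousOn hg'cont
  have hu'int : IntervalIntegrable (fun t => ((g' t : ℝ) : ℂ)) volume a b :=
    ContinuousOn.intervalIntegrable (by rw [huIcc]; exact hu'c)
  have hv'int : IntervalIntegrable
      (fun t => Complex.exp (Complex.I * (φ t : ℂ)) * (Complex.I * (φ' t : ℂ))) volume a b :=
    ContinuousOn.intervalIntegrable (by rw [huIcc]; exact hv'c)
  have hibp := intervalIntegral.integral_deriv_mul_eq_sub_of_hasDerivWithinAt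
    (u := fun t => ((g t : ℝ) : ℂ)) (v := fun s => Complex.exp (Complex.I * (φ s : ℂ)))
    (u' := fun t => ((g' t : ℝ) : ℂ))
    (v' := fun t => Complex.exp (Complex.I * (φ t : ℂ)) * (Complex.I * (φ' t : ℂ)))
    (a := a) (b := b)
    (fun t ht => by rw [huIcc] at ht ⊢; exact hud t ht)
    (fun t ht => by rw [huIcc] at ht ⊢; exact hvd t ht)
    hu'int hv'int
  have hb0 : ((g b : ℝ) : ℂ) * Complex.exp (Complex.I * (φ b : ℂ))
      - ((g a : ℝ) : ℂ) * Complex.exp (Complex.I * (φ a : ℂ)) = 0 := by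
    obtain ⟨k, hk⟩ := hper
    have hgba : g b = g a := by show (φ' b)⁻¹ = (φ' a)⁻¹; rw [hd]
    have hexp : Complex.exp (Complex.I * (φ b : ℂ)) = Complex.exp (Complex.I * (φ a : ℂ)) := by
      rw [hk]
      have h2 : (Complex.I * ((φ a + 2 * (k : ℝ) * π : ℝ) : ℂ))
          = Complex.I * (φ a : ℂ) + (k : ℂ) * (2 * (π : ℂ) * Complex.I) := by
        push_cast; ring
      rw [h2, Complex.exp_add, Complex.exp_int_mul_two_pi_mul_I, mul_one]
    rw [hgba, hexp, sub_self]
  have hsimp : Set.EqOn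
      (fun t => ((g' t : ℝ) : ℂ) * Complex.exp (Complex.I * (φ t : ℂ))
        + ((g t : ℝ) : ℂ) * (Complex.exp (Complex.I * (φ t : ℂ)) * (Complex.I * (φ' t : ℂ))))
      (fun t => ((g' t : ℝ) : ℂ) * Complex.exp (Complex.I * (φ t : ℂ))
        + Complex.I * Complex.exp (Complex.I * (φ t : ℂ)))
      (Set.uIcc a b) := by
    intro t ht
    rw [huIcc] at ht
    have hzne : ((φ' t : ℝ) : ℂ) ≠ 0 := Complex.ofReal_ne_zero.mpr (hne t ht)
    show ((g' t : ℝ) : ℂ) * Complex.exp (Complex.I * (φ t : ℂ))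
        + ((g t : ℝ) : ℂ) * (Complex.exp (Complex.I * (φ t : ℂ)) * (Complex.I * (φ' t : ℂ)))
      = ((g' t : ℝ) : ℂ) * Complex.exp (Complex.I * (φ t : ℂ))
        + Complex.I * Complex.exp (Complex.I * (φ t : ℂ))
    have hgt : ((g t : ℝ) : ℂ) = (((φ' t) : ℝ) : ℂ)⁻¹ := by
      show (((φ' t)⁻¹ : ℝ) : ℂ) = _
      push_cast
      ring
    rw [hgt]
    field_simp
  have hI2 : (∫ t in a..b, (((g' t : ℝ) : ℂ) * Complex.exp (Complex.I * (φ t : ℂ))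
      + Complex.I * Complex.exp (Complex.I * (φ t : ℂ)))) = 0 := by
    rw [← intervalIntegral.integral_congr hsimp, hibp, hb0]
  have hu'vint : IntervalIntegrable
      (fun t => ((g' t : ℝ) : ℂ) * Complex.exp (Complex.I * (φ t : ℂ))) volume a b :=
    ContinuousOn.intervalIntegrable (by rw [huIcc]; exact hu'c.mul hvc)
  have hIvint : IntervalIntegrable
      (fun t => Complex.I * Complex.exp (Complex.I * (φ t : ℂ))) volume a b :=
    ContinuousOn.intervalIntegrable (by rw [huIcc]; exact continuousOn_const.mul hvc)
  have hsplit : (∫ t in a..b, ((g' t : ℝ) : ℂ) * Complex.exp (Complex.I * (φ t : ℂ)))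
      + Complex.I * (∫ t in a..b, Complex.exp (Complex.I * (φ t : ℂ))) = 0 := by
    rw [← intervalIntegral.integral_const_mul,
      ← intervalIntegral.integral_add hu'vint hIvint]
    exact hI2
  have hkey : ‖∫ t in a..b, Complex.exp (Complex.I * (φ t : ℂ))‖
      = ‖∫ t in a..b, ((g' t : ℝ) : ℂ) * Complex.exp (Complex.I * (φ t : ℂ))‖ := by
    have h5 : (∫ t in a..b, ((g' t : ℝ) : ℂ) * Complex.exp (Complex.I * (φ t : ℂ)))
        = -(Complex.I * ∫ t in a..b, Complex.exp (Complex.I * (φ t : ℂ))) :=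
      eq_neg_of_add_eq_zero_left hsplit
    rw [h5, norm_neg, norm_mul, Complex.norm_I, one_mul]
  rw [hkey]
  exact aux_sum_le_evar a b hab g g' (fun s => Complex.exp (Complex.I * (φ s : ℂ)))
    hgd hg'cont hvc (fun t ht => by simp [Complex.norm_exp])
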